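/- The maximal estimate $\| \sup_{0 \leq t \leq 1} |e^{it\Delta} f(x)| \|_{L^2_x(\mathbb{T})} \lesssim \|f\|_{H^s(\mathbb{T})}$ fails for every $s < \frac{1}{4}$. Specifically, for $\kappa \in (0,\frac12)$ and $N \gg 1$, the modulated data $\tilde{f}(x) = e^{ix}\sum_{|k| \leq N/D} e^{iDkx}$ with $D = \lfloor N^{1-\kappa} \rfloor$ satisfies $\|\tilde f\|_{L^2(\mathbb{T})} \sim N^{\kappa/2}$ while $\sup_{0 \leq t \leq 1/D} |e^{it\Delta} \tilde f(x)| \gtrsim N^{\kappa}$ on a set of $x$ of measure comparable to $1$. -/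

import Mathlib

open MeasureTheory Complex

noncomputable section
open Classical

def freeSol1 (c : ℤ → ℂ) (x t : ℝ) : ℂ :=
  ∑' n : ℤ, c n * Complex.exp (Complex.I * (((n:ℝ)*x - (n:ℝ)^2*t : ℝ) : ℂ))

def HsNorm1 (s : ℝ) (c : ℤ → ℂ) : ℝ :=
  Real.sqrt (∑' n : ℤ, (Real.sqrt (1 + (n:ℝ)^2)) ^ (2*s) * ‖c n‖^2)

def circleL2 (g : ℝ → ℝ) : ℝ :=
  Real.sqrt (∫ x in Set.Icc (0:ℝ) (2*Real.pi), (g x)^2)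

def ftildeCoef (N D : ℕ) : ℤ → ℂ :=
  fun n => if ∃ k : ℤ, |(k:ℝ)| ≤ (N:ℝ)/(D:ℝ) ∧ n = (D:ℤ)*k + 1 then 1 else 0

namespace TMF

def SS (N D : ℕ) : Finset ℤ :=
  (Finset.Icc (-((N/D : ℕ) : ℤ)) ((N/D : ℕ) : ℤ)).image (fun k => (D:ℤ)*k+1)

lemma abs_cast_le_iff {N D : ℕ} (hD : 0 < D) (k : ℤ) :
    |(k:ℝ)| ≤ (N:ℝ)/(D:ℝ) ↔ k ∈ Finset.Icc (-((N/D : ℕ) : ℤ)) ((N/D : ℕ) : ℤ) := by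
  have h1 : |(k:ℝ)| = (k.natAbs : ℝ) := by
    rw [Nat.cast_natAbs]; simp
  have h2 : (0:ℝ) ≤ (N:ℝ)/(D:ℝ) := by positivity
  rw [h1, ← Nat.le_floor_iff h2, Nat.floor_div_natCast, Nat.floor_natCast]
  rw [Finset.mem_Icc, ← abs_le, Int.abs_eq_natAbs, ← Nat.cast_le (α := ℤ)]

lemma ftildeCoef_eq {N D : ℕ} (hD : 0 < D) (n : ℤ) :
    ftildeCoef N D n = if n ∈ SS N D then 1 else 0 := by
  unfold ftildeCoef SS
  congr 1
  simp only [eq_iff_iff, Finset.mem_image]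
  constructor
  · rintro ⟨k, hk, rfl⟩
    exact ⟨k, (abs_cast_le_iff hD k).1 hk, rfl⟩
  · rintro ⟨k, hk, rfl⟩
    exact ⟨k, (abs_cast_le_iff hD k).2 hk, rfl⟩

lemma card_SS {N D : ℕ} (hD : 0 < D) : (SS N D).card = 2*(N/D) + 1 := by
  unfold SS
  rw [Finset.card_image_of_injective _ (fun a b h => by
    have hD' : (D:ℤ) ≠ 0 := by exact_mod_cast hD.ne'
    have := mul_left_cancel₀ hD' (by linarith [add_right_cancel h] : (D:ℤ)*a = (D:ℤ)*b)
    exact this)]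
  rw [Int.card_Icc]
  omega

lemma freeSol1_eq_sum (N D : ℕ) (hD : 0 < D) (x t : ℝ) :
    freeSol1 (ftildeCoef N D) x t
      = ∑ n ∈ SS N D, Complex.exp (Complex.I * (((n:ℝ)*x - (n:ℝ)^2*t : ℝ) : ℂ)) := by
  unfold freeSol1
  rw [tsum_eq_sum (s := SS N D)]
  · apply Finset.sum_congr rfl
    intro n hn
    rw [ftildeCoef_eq hD, if_pos hn, one_mul]
  · intro n hn
    rw [ftildeCoef_eq hD, if_neg hn, zero_mul]

lemma norm_freeSol1_le (N D : ℕ) (hD : 0 < D) (x t : ℝ) :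
    ‖freeSol1 (ftildeCoef N D) x t‖ ≤ ((SS N D).card : ℝ) := by
  rw [freeSol1_eq_sum N D hD]
  refine le_trans (norm_sum_le _ _) ?_
  have : ∀ n ∈ SS N D, ‖Complex.exp (Complex.I * (((n:ℝ)*x - (n:ℝ)^2*t : ℝ) : ℂ))‖ = 1 := by
    intro n _
    rw [mul_comm, Complex.norm_exp_ofReal_mul_I]
  rw [Finset.sum_congr rfl this, Finset.sum_const, nsmul_eq_mul, mul_one]

end TMF

namespace TMF

lemma integral_cos_int (j : ℤ) :
    ∫ x in (0:ℝ)..(2*Real.pi), Real.cos ((j:ℝ)*x) = if j = 0 then 2*Real.pi else 0 := by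
  split_ifs with h
  · subst h; simp
  · have hj : (j:ℝ) ≠ 0 := Int.cast_ne_zero.2 h
    have hderiv : ∀ x ∈ Set.uIcc (0:ℝ) (2*Real.pi),
        HasDerivAt (fun y => Real.sin ((j:ℝ)*y)/(j:ℝ)) (Real.cos ((j:ℝ)*x)) x := by
      intro x _
      have h1 : HasDerivAt (fun y : ℝ => (j:ℝ)*y) ((j:ℝ)) x := by
        simpa using (hasDerivAt_id x).const_mul (j:ℝ)
      have h2 := (Real.hasDerivAt_sin ((j:ℝ)*x)).comp x h1
      have h3 := h2.div_const (j:ℝ)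
      simpa [mul_comm, mul_div_assoc, mul_div_cancel_left₀ _ hj] using h3
    rw [intervalIntegral.integral_eq_sub_of_hasDerivAt hderiv ?_]
    · have h2 : (j:ℝ)*(2*Real.pi) = ((2*j : ℤ):ℝ)*Real.pi := by push_cast; ring
      rw [h2, Real.sin_int_mul_pi]
      simp
    · exact (Real.continuous_cos.comp (continuous_const.mul continuous_id)).intervalIntegrable _ _

lemma norm_sq_sum_exp (S : Finset ℤ) (x : ℝ) :
    ‖∑ n ∈ S, Complex.exp (Complex.I * (((n:ℝ)*x : ℝ):ℂ))‖^2
      = ∑ m ∈ S, ∑ n ∈ S, Real.cos (((m - n : ℤ):ℝ)*x) := by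
  have hre : (∑ n ∈ S, Complex.exp (Complex.I * (((n:ℝ)*x : ℝ):ℂ))).re
      = ∑ n ∈ S, Real.cos ((n:ℝ)*x) := by
    rw [Complex.re_sum]
    refine Finset.sum_congr rfl fun n _ => ?_
    rw [mul_comm, Complex.exp_ofReal_mul_I_re]
  have him : (∑ n ∈ S, Complex.exp (Complex.I * (((n:ℝ)*x : ℝ):ℂ))).im
      = ∑ n ∈ S, Real.sin ((n:ℝ)*x) := by
    rw [Complex.im_sum]
    refine Finset.sum_congr rfl fun n _ => ?_
    rw [mul_comm, Complex.exp_ofReal_mul_I_im]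
  rw [Complex.sq_norm, Complex.normSq_apply, hre, him,
    Finset.sum_mul_sum, Finset.sum_mul_sum, ← Finset.sum_add_distrib]
  refine Finset.sum_congr rfl fun m _ => ?_
  rw [← Finset.sum_add_distrib]
  refine Finset.sum_congr rfl fun n _ => ?_
  rw [← Real.cos_sub]
  congr 1
  push_cast
  ring

set_option maxHeartbeats 1000000 in
lemma parseval (S : Finset ℤ) :
    ∫ x in Set.Icc (0:ℝ) (2*Real.pi), ‖∑ n ∈ S, Complex.exp (Complex.I * (((n:ℝ)*x : ℝ):ℂ))‖^2
      = 2*Real.pi * S.card := by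
  have hpi : (0:ℝ) ≤ 2*Real.pi := by positivity
  rw [MeasureTheory.integral_Icc_eq_integral_Ioc, ← intervalIntegral.integral_of_le hpi]
  have : ∀ x : ℝ, ‖∑ n ∈ S, Complex.exp (Complex.I * (((n:ℝ)*x : ℝ):ℂ))‖^2
      = ∑ m ∈ S, ∑ n ∈ S, Real.cos (((m - n : ℤ):ℝ)*x) := fun x => norm_sq_sum_exp S x
  rw [intervalIntegral.integral_congr (fun x _ => this x)]
  have hcont : ∀ j : ℤ, IntervalIntegrable (fun x => Real.cos ((j:ℝ)*x)) volume 0 (2*Real.pi) :=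
    fun j => (Real.continuous_cos.comp (continuous_const.mul continuous_id)).intervalIntegrable _ _
  have hc : ∀ m : ℤ, Continuous (fun x : ℝ => ∑ n ∈ S, Real.cos (((m - n : ℤ):ℝ)*x)) := by
    intro m
    exact continuous_finset_sum S (fun n _ =>
      Real.continuous_cos.comp (continuous_const.mul continuous_id))
  rw [intervalIntegral.integral_finset_sum (s := S)
      (f := fun (m : ℤ) (x : ℝ) => ∑ n ∈ S, Real.cos (((m - n : ℤ):ℝ)*x))
      (fun m _ => (hc m).intervalIntegrable _ _)]
  have : ∀ m : ℤ, (∫ x in (0:ℝ)..(2*Real.pi), ∑ n ∈ S, Real.cos (((m - n : ℤ):ℝ)*x))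
      = ∑ n ∈ S, if m - n = 0 then 2*Real.pi else 0 := by
    intro m
    rw [intervalIntegral.integral_finset_sum (fun n _ => hcont (m-n))]
    exact Finset.sum_congr rfl fun n _ => integral_cos_int (m-n)
  rw [Finset.sum_congr rfl fun m _ => this m]
  have : ∀ m ∈ S, (∑ n ∈ S, if m - n = 0 then 2*Real.pi else 0) = 2*Real.pi := by
    intro m hm
    have : ∀ n : ℤ, (if m - n = 0 then 2*Real.pi else 0) = if n = m then 2*Real.pi else 0 := by
      intro n
      congr 1
      simp [sub_eq_zero, eq_comm]
    rw [Finset.sum_congr rfl fun n _ => this n, Finset.sum_ite_eq' S m, if_pos hm]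
  rw [Finset.sum_congr rfl this, Finset.sum_const, nsmul_eq_mul]
  ring

end TMF

namespace TMF

lemma sum_lower (N D : ℕ) (hD : 0 < D) (x t θ : ℝ) (l j : ℤ)
    (hx : x - 2*t - θ = 2*Real.pi*l/D) (ht : (D:ℝ)^2*t = 2*Real.pi*j)
    (hθ : ∀ k : ℤ, |k| ≤ ((N/D : ℕ) : ℤ) → |(D:ℝ)*k*θ| ≤ Real.pi/3) :
    ((2*(N/D)+1 : ℕ):ℝ)/2 ≤ ‖freeSol1 (ftildeCoef N D) x t‖ := by
  have hD' : (D:ℝ) ≠ 0 := Nat.cast_ne_zero.2 hD.ne'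
  rw [freeSol1_eq_sum N D hD]
  unfold SS
  rw [Finset.sum_image (fun a _ b _ h => by
    have hD'' : (D:ℤ) ≠ 0 := by exact_mod_cast hD.ne'
    have := mul_left_cancel₀ hD'' (by linarith [add_right_cancel h] : (D:ℤ)*a = (D:ℤ)*b)
    exact this)]
  have key : ∀ k : ℤ, k ∈ Finset.Icc (-((N/D : ℕ) : ℤ)) ((N/D : ℕ) : ℤ) →
      Complex.exp (Complex.I * (((((D:ℤ)*k+1 : ℤ):ℝ)*x - (((D:ℤ)*k+1 : ℤ):ℝ)^2*t : ℝ) : ℂ))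
        = Complex.exp (Complex.I * ((x - t : ℝ):ℂ)) * Complex.exp (Complex.I * (((D:ℝ)*k*θ : ℝ):ℂ)) := by
    intro k _
    have harg : ((((D:ℤ)*k+1 : ℤ):ℝ)*x - (((D:ℤ)*k+1 : ℤ):ℝ)^2*t : ℝ)
        = (x - t) + (D:ℝ)*k*θ + (k*l - k^2*j : ℤ)*(2*Real.pi) := by
      push_cast
      have hx' : x - 2*t - θ - 2*Real.pi*l/D = 0 := by rw [hx]; ring
      have hd : (D:ℝ)*(x - 2*t - θ - 2*Real.pi*l/D) = 0 := by rw [hx']; ring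
      have hd2 : (D:ℝ)*(x-2*t-θ) = 2*Real.pi*l := by
        field_simp at hd
        linarith [hd]
      linear_combination (k:ℝ)*hd2 - (k:ℝ)^2*ht
    rw [harg]
    push_cast
    rw [mul_add, mul_add, Complex.exp_add, Complex.exp_add]
    have : Complex.I * ((k*l - k^2*j : ℤ):ℂ) * (2*Real.pi)
        = ((k*l - k^2*j : ℤ):ℂ) * (2*Real.pi*Complex.I) := by push_cast; ring
    have h1 : Complex.exp (Complex.I * (((k:ℂ)*l - (k:ℂ)^2*j) * (2*Real.pi)))
        = 1 := by
      have := Complex.exp_int_mul_two_pi_mul_I (k*l - k^2*j)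
      rw [← this]
      congr 1
      push_cast
      ring
    rw [h1, mul_one]
  rw [Finset.sum_congr rfl key, ← Finset.mul_sum]
  rw [norm_mul]
  have h2 : ‖Complex.exp (Complex.I * ((x - t : ℝ):ℂ))‖ = 1 := by
    rw [mul_comm, Complex.norm_exp_ofReal_mul_I]
  rw [h2, one_mul]
  refine le_trans ?_ (Complex.re_le_norm _)
  rw [Complex.re_sum]
  have h3 : ∀ k : ℤ, k ∈ Finset.Icc (-((N/D : ℕ) : ℤ)) ((N/D : ℕ) : ℤ) →
      (1:ℝ)/2 ≤ (Complex.exp (Complex.I * (((D:ℝ)*k*θ : ℝ):ℂ))).re := by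
    intro k hk
    rw [mul_comm, Complex.exp_ofReal_mul_I_re]
    have habs : |(D:ℝ)*k*θ| ≤ Real.pi/3 := by
      apply hθ
      rw [Finset.mem_Icc] at hk
      exact abs_le.2 hk
    have := Real.cos_le_cos_of_nonneg_of_le_pi (abs_nonneg ((D:ℝ)*k*θ))
      (by linarith [Real.pi_pos] : Real.pi/3 ≤ Real.pi) habs
    rw [Real.cos_abs] at this
    calc (1:ℝ)/2 = Real.cos (Real.pi/3) := by rw [Real.cos_pi_div_three]
    _ ≤ _ := this
  refine le_trans ?_ (Finset.sum_le_sum h3)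
  rw [Finset.sum_const, nsmul_eq_mul, Int.card_Icc]
  have hcard : ((((N/D : ℕ) : ℤ)) + 1 - -(((N/D : ℕ) : ℤ))).toNat = 2*(N/D)+1 := by omega
  rw [hcard]
  push_cast
  linarith

end TMF

namespace TMF

lemma exists_time (N D : ℕ) (hD : 0 < D) (h12 : 12*(N/D) ≤ D)
    (l : ℕ) (x : ℝ)
    (hx : x ∈ Set.Ico (2*Real.pi*l/D) (2*Real.pi*l/D + 1/D)) :
    ∃ t : ℝ, 0 ≤ t ∧ t ≤ 1/(D:ℝ) ∧
      ((2*(N/D)+1 : ℕ):ℝ)/2 ≤ ‖freeSol1 (ftildeCoef N D) x t‖ := by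
  have hπ := Real.pi_pos
  have hD' : (0:ℝ) < (D:ℝ) := Nat.cast_pos.2 hD
  have hD2 : (0:ℝ) < (D:ℝ)^2 := by positivity
  obtain ⟨y, hy⟩ : ∃ y : ℝ, y = x - 2*Real.pi*l/D := ⟨_, rfl⟩
  have hy0 : 0 ≤ y := by rw [hy]; linarith [hx.1]
  have hy1 : y < 1/(D:ℝ) := by rw [hy]; linarith [hx.2]
  obtain ⟨j, hj⟩ : ∃ j : ℕ, j = ⌊(D:ℝ)^2*y/(4*Real.pi)⌋₊ := ⟨_, rfl⟩
  obtain ⟨t, htdef⟩ : ∃ t : ℝ, t = 2*Real.pi*j/(D:ℝ)^2 := ⟨_, rfl⟩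
  obtain ⟨θ, hθdef⟩ : ∃ θ : ℝ, θ = y - 2*t := ⟨_, rfl⟩
  have hjle : ((j:ℝ))*(4*Real.pi) ≤ (D:ℝ)^2*y := by
    have := Nat.floor_le (by positivity : (0:ℝ) ≤ (D:ℝ)^2*y/(4*Real.pi))
    rw [← hj] at this
    exact (le_div_iff₀ (by positivity)).1 this
  have hjgt : (D:ℝ)^2*y < ((j:ℝ)+1)*(4*Real.pi) := by
    have := Nat.lt_floor_add_one ((D:ℝ)^2*y/(4*Real.pi))
    rw [← hj] at this
    exact (div_lt_iff₀ (by positivity)).1 this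
  have ht0 : 0 ≤ t := by rw [htdef]; positivity
  have e1 : 2*t = ((j:ℝ)*(4*Real.pi))/(D:ℝ)^2 := by rw [htdef]; ring
  have h2t : 2*t ≤ y := by
    rw [e1, div_le_iff₀ hD2]
    nlinarith [hjle]
  have htle : t ≤ 1/(D:ℝ) := by
    have h1 : (0:ℝ) < 1/D := by positivity
    have h2 : t ≤ y/2 := by linarith
    linarith
  have hθ0 : 0 ≤ θ := by rw [hθdef]; linarith
  have hθub : θ ≤ 4*Real.pi/(D:ℝ)^2 := by
    have e2 : θ = y - ((j:ℝ)*(4*Real.pi))/(D:ℝ)^2 := by rw [hθdef, ← e1]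
    rw [e2, sub_le_iff_le_add, ← add_div, le_div_iff₀ hD2]
    nlinarith [hjgt]
  refine ⟨t, ht0, htle, ?_⟩
  refine sum_lower N D hD x t θ (l:ℤ) (j:ℤ) ?_ ?_ ?_
  · push_cast
    rw [hθdef, hy]
    ring
  · rw [htdef]
    push_cast
    field_simp
  · intro k hk
    have hk' : |(k:ℝ)| ≤ ((N/D : ℕ):ℝ) := by
      have hk2 : ((|k|:ℤ):ℝ) ≤ (((N/D:ℕ):ℤ):ℝ) := by
        rw [Int.cast_le]
        exact hk
      rw [Int.cast_abs] at hk2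
      rw [Int.cast_natCast] at hk2
      exact hk2
    have h1 : |(D:ℝ)*k*θ| = (D:ℝ) * |(k:ℝ)| * θ := by
      simp [abs_mul, _root_.abs_of_nonneg hD'.le, _root_.abs_of_nonneg hθ0]
    rw [h1]
    have h2 : (D:ℝ) * |(k:ℝ)| * θ ≤ (D:ℝ)*((N/D : ℕ):ℝ)*(4*Real.pi/(D:ℝ)^2) := by
      apply mul_le_mul
      · exact mul_le_mul_of_nonneg_left hk' hD'.le
      · exact hθub
      · exact hθ0
      · positivity
    refine le_trans h2 ?_
    have h3 : ((12*(N/D) : ℕ):ℝ) ≤ (D:ℝ) := Nat.cast_le.2 h12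
    push_cast at h3
    have e3 : (D:ℝ)*((N/D : ℕ):ℝ)*(4*Real.pi/(D:ℝ)^2) = 4*Real.pi*((N/D : ℕ):ℝ)/D := by
      field_simp
    rw [e3, div_le_div_iff₀ hD' (by norm_num : (0:ℝ) < 3)]
    nlinarith [mul_le_mul_of_nonneg_left h3 hπ.le]

end TMF

namespace TMF

def EE (D : ℕ) : Set ℝ :=
  ⋃ l ∈ Finset.range D, Set.Ico (2*Real.pi*l/D) (2*Real.pi*l/D + 1/D)

lemma EE_measurable (D : ℕ) : MeasurableSet (EE D) :=
  Finset.measurableSet_biUnion _ (fun _ _ => measurableSet_Ico)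

lemma EE_subset (D : ℕ) (hD : 0 < D) : EE D ⊆ Set.Icc 0 (2*Real.pi) := by
  have hπ := Real.pi_pos
  have hD' : (0:ℝ) < (D:ℝ) := Nat.cast_pos.2 hD
  intro x hx
  simp only [EE, Set.mem_iUnion, Finset.mem_range] at hx
  obtain ⟨l, hl, hx1, hx2⟩ := hx
  have hl' : (l:ℝ) ≤ (D:ℝ) - 1 := by
    have : (l:ℝ) + 1 ≤ (D:ℝ) := by exact_mod_cast hl
    linarith
  constructor
  · have : (0:ℝ) ≤ 2*Real.pi*l/D := by positivity
    linarith
  · have h1 : (2*Real.pi*l/D + 1/D) ≤ 2*Real.pi := by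
      rw [← add_div, div_le_iff₀ hD']
      have h2 := mul_le_mul_of_nonneg_left hl' (by positivity : (0:ℝ) ≤ 2*Real.pi)
      nlinarith [Real.pi_gt_three]
    linarith

lemma EE_volume (D : ℕ) (hD : 0 < D) : volume (EE D) = ENNReal.ofReal 1 := by
  have hπ := Real.pi_pos
  have hD' : (0:ℝ) < (D:ℝ) := Nat.cast_pos.2 hD
  unfold EE
  have key : ∀ p q : ℕ, p < q → Disjoint
      (Set.Ico (2*Real.pi*p/D) (2*Real.pi*p/D + 1/D))
      (Set.Ico (2*Real.pi*q/D) (2*Real.pi*q/D + 1/D)) := by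
    intro p q hpq
    rw [Set.disjoint_left]
    rintro x ⟨_, hx2⟩ ⟨hx3, _⟩
    have hpq' : (p:ℝ) + 1 ≤ (q:ℝ) := by exact_mod_cast hpq
    have : 2*Real.pi*p/D + 1/D ≤ 2*Real.pi*q/D := by
      rw [← add_div, div_le_div_iff₀ hD' hD']
      have h2 := mul_le_mul_of_nonneg_left hpq' (by positivity : (0:ℝ) ≤ 2*Real.pi)
      nlinarith [Real.pi_gt_three, hD']
    linarith
  rw [measure_biUnion_finset ?_ (fun _ _ => measurableSet_Ico)]
  · have h2 : ∀ l ∈ Finset.range D,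
        volume (Set.Ico (2*Real.pi*l/D) (2*Real.pi*l/D + 1/D)) = ENNReal.ofReal (1/D) := by
      intro l _
      rw [Real.volume_Ico]
      congr 1
      ring
    rw [Finset.sum_congr rfl h2, Finset.sum_const, nsmul_eq_mul, Finset.card_range]
    rw [← ENNReal.ofReal_natCast D, ← ENNReal.ofReal_mul (by positivity)]
    congr 1
    field_simp
  · intro a _ b _ hab
    rcases hab.lt_or_gt with h | h
    · exact key a b h
    · exact (key b a h).symm

lemma circleL2_t0 (N D : ℕ) (hD : 0 < D) :
    circleL2 (fun x => ‖freeSol1 (ftildeCoef N D) x 0‖)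
      = Real.sqrt (2*Real.pi * (2*(N/D)+1 : ℕ)) := by
  unfold circleL2
  have h : ∀ x : ℝ, (‖freeSol1 (ftildeCoef N D) x 0‖)^2
      = ‖∑ n ∈ SS N D, Complex.exp (Complex.I * (((n:ℝ)*x : ℝ):ℂ))‖^2 := by
    intro x
    rw [freeSol1_eq_sum N D hD]
    congr 2
    refine Finset.sum_congr rfl fun n _ => ?_
    norm_num
  simp only [h]
  rw [parseval, card_SS (N := N) (D := D) hD]

end TMF

namespace TMF

lemma core (κ : ℝ) (hκ0 : 0 < κ) (hκ2 : κ < 1/2) :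
    ∃ N₀ : ℕ, ∀ N : ℕ, N₀ ≤ N → ∀ D : ℕ, D = Nat.floor ((N:ℝ)^(1-κ)) →
      0 < D ∧ 12*(N/D) ≤ D ∧ (N:ℝ)^κ ≤ 2*((N/D : ℕ):ℝ)+1 ∧ (2*((N/D : ℕ):ℝ)+1 ≤ 5*(N:ℝ)^κ)
        ∧ 1 ≤ (N:ℝ)^κ ∧ (1:ℝ) ≤ (N:ℝ) := by
  have hexp : 0 < 1-2*κ := by linarith
  refine ⟨⌈(48:ℝ)^(1/(1-2*κ))⌉₊ + 1, ?_⟩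
  intro N hN D hDdef
  have hR1 : (1:ℝ) ≤ (N:ℝ) := by
    have h48 : (1:ℝ) ≤ (48:ℝ)^(1/(1-2*κ)) := by
      apply Real.one_le_rpow (by norm_num) (by positivity)
    have : 1 ≤ N := by
      calc 1 ≤ ⌈(48:ℝ)^(1/(1-2*κ))⌉₊ + 1 := by omega
      _ ≤ N := hN
    exact_mod_cast this
  have hR0 : (0:ℝ) < (N:ℝ) := by linarith
  have hR48 : (48:ℝ) ≤ (N:ℝ)^(1-2*κ) := by
    have hbase : (48:ℝ)^(1/(1-2*κ)) ≤ (N:ℝ) := by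
      refine le_trans (Nat.le_ceil _) ?_
      have : (⌈(48:ℝ)^(1/(1-2*κ))⌉₊ : ℝ) ≤ (N:ℝ) := by
        exact_mod_cast le_trans (Nat.le_succ _) hN
      exact this
    have h1 := Real.rpow_le_rpow (by positivity) hbase hexp.le
    rw [← Real.rpow_mul (by norm_num : (0:ℝ) ≤ 48), one_div,
      inv_mul_cancel₀ hexp.ne', Real.rpow_one] at h1
    exact h1
  have ha1 : (1:ℝ) ≤ (N:ℝ)^(1-κ) := by
    have := Real.rpow_le_rpow_of_exponent_le hR1 (by linarith : (0:ℝ) ≤ 1-κ)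
    rwa [Real.rpow_zero] at this
  have hκR1 : (1:ℝ) ≤ (N:ℝ)^κ := by
    have := Real.rpow_le_rpow_of_exponent_le hR1 hκ0.le
    rwa [Real.rpow_zero] at this
  have hD1 : 0 < D := by
    rw [hDdef]
    exact Nat.le_floor (by exact_mod_cast ha1)
  have hD1' : (1:ℝ) ≤ (D:ℝ) := by exact_mod_cast hD1
  have hD0 : (0:ℝ) < (D:ℝ) := by linarith
  have hDle : (D:ℝ) ≤ (N:ℝ)^(1-κ) := by
    rw [hDdef]
    exact Nat.floor_le (by positivity)
  have hDge : (N:ℝ)^(1-κ)/2 ≤ (D:ℝ) := by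
    have hfl : (N:ℝ)^(1-κ) - 1 < (D:ℝ) := by
      have := Nat.lt_floor_add_one ((N:ℝ)^(1-κ))
      rw [← hDdef] at this
      linarith
    rcases le_or_gt ((N:ℝ)^(1-κ)) 2 with h | h
    · linarith
    · linarith
  have hRpow : (N:ℝ)^κ * (N:ℝ)^(1-κ) = (N:ℝ) := by
    rw [← Real.rpow_add hR0]
    norm_num
  have ha0 : (N:ℝ)^(1-κ) ≠ 0 := by positivity
  have hMub : ((N/D : ℕ):ℝ) ≤ 2*(N:ℝ)^κ := by
    refine le_trans (Nat.cast_div_le) ?_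
    have h1 : (N:ℝ)/(D:ℝ) ≤ (N:ℝ)/((N:ℝ)^(1-κ)/2) :=
      div_le_div_of_nonneg_left hR0.le (by linarith) hDge
    refine le_trans h1 ?_
    rw [div_le_iff₀ (by linarith)]
    nlinarith [hRpow]
  have hMlb : (N:ℝ)^κ - 1 ≤ ((N/D : ℕ):ℝ) := by
    have h1 : N < N/D*D + D := Nat.lt_div_mul_add hD1
    have h2 : (N:ℝ) < ((N/D : ℕ):ℝ)*(D:ℝ) + (D:ℝ) := by exact_mod_cast h1
    have h3 : (N:ℝ)^κ * (D:ℝ) ≤ (N:ℝ) := by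
      calc (N:ℝ)^κ * (D:ℝ) ≤ (N:ℝ)^κ * (N:ℝ)^(1-κ) := by
            exact mul_le_mul_of_nonneg_left hDle (by positivity)
      _ = (N:ℝ) := hRpow
    nlinarith [h2, h3, hD0]
  refine ⟨hD1, ?_, by nlinarith [hMlb, hκR1], by nlinarith [hMub, hκR1], hκR1, hR1⟩
  have hcast : ((12*(N/D) : ℕ):ℝ) ≤ (D:ℝ) := by
    push_cast
    have h48 : 48*(N:ℝ)^κ ≤ (N:ℝ)^(1-κ) := by
      have he : (N:ℝ)^(1-2*κ) * (N:ℝ)^κ = (N:ℝ)^(1-κ) := by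
        rw [← Real.rpow_add hR0]
        ring_nf
      nlinarith [mul_le_mul_of_nonneg_right hR48 (by positivity : (0:ℝ) ≤ (N:ℝ)^κ)]
    nlinarith [hMub, hDge]
  exact_mod_cast hcast

end TMF

namespace TMF

lemma bdd_sup (N D : ℕ) (hD : 0 < D) (x : ℝ) (cc : ℝ) :
    BddAbove (Set.range fun t : Set.Icc (0:ℝ) cc => ‖freeSol1 (ftildeCoef N D) x t.1‖) := by
  refine ⟨((SS N D).card : ℝ), ?_⟩
  rintro _ ⟨t, rfl⟩
  exact norm_freeSol1_le N D hD x t.1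

lemma sqrt_rpow_half (R κ : ℝ) (hR : 0 ≤ R) : (R^(κ/2))^2 = R^κ := by
  rw [← Real.rpow_natCast (R^(κ/2)) 2, ← Real.rpow_mul hR]
  norm_num

lemma L2_lower (N D : ℕ) (hD : 0 < D) (κ : ℝ) (hR0 : (0:ℝ) ≤ (N:ℝ))
    (hC1 : (N:ℝ)^κ ≤ 2*((N/D : ℕ):ℝ)+1) :
    (1/2) * (N:ℝ)^(κ/2) ≤ circleL2 (fun x => ‖freeSol1 (ftildeCoef N D) x 0‖) := by
  rw [circleL2_t0 N D hD]
  have hπ := Real.pi_gt_three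
  rw [show ((2*(N/D)+1 : ℕ):ℝ) = 2*((N/D : ℕ):ℝ)+1 by push_cast; ring]
  have hnn : (0:ℝ) ≤ (1/2) * (N:ℝ)^(κ/2) := by positivity
  rw [show (1/2) * (N:ℝ)^(κ/2) = Real.sqrt (((1/2) * (N:ℝ)^(κ/2))^2) from
    (Real.sqrt_sq hnn).symm]
  apply Real.sqrt_le_sqrt
  have h1 : ((1/2) * (N:ℝ)^(κ/2))^2 = (1/4) * (N:ℝ)^κ := by
    rw [mul_pow, sqrt_rpow_half _ _ hR0]
    norm_num
  rw [h1]
  nlinarith [hC1, Real.rpow_nonneg hR0 κ]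

lemma L2_upper (N D : ℕ) (hD : 0 < D) (κ : ℝ) (hR0 : (0:ℝ) ≤ (N:ℝ))
    (hC2 : 2*((N/D : ℕ):ℝ)+1 ≤ 5*(N:ℝ)^κ) :
    circleL2 (fun x => ‖freeSol1 (ftildeCoef N D) x 0‖) ≤ 6 * (N:ℝ)^(κ/2) := by
  rw [circleL2_t0 N D hD]
  have hπ : Real.pi < 3.15 := Real.pi_lt_d2
  have hπ0 := Real.pi_pos
  have hnn : (0:ℝ) ≤ 6 * (N:ℝ)^(κ/2) := by positivity
  rw [show (6:ℝ) * (N:ℝ)^(κ/2) = Real.sqrt ((6 * (N:ℝ)^(κ/2))^2) from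
    (Real.sqrt_sq hnn).symm]
  apply Real.sqrt_le_sqrt
  have h1 : ((6:ℝ) * (N:ℝ)^(κ/2))^2 = 36 * (N:ℝ)^κ := by
    rw [mul_pow, sqrt_rpow_half _ _ hR0]
    norm_num
  rw [h1, show ((2*(N/D)+1 : ℕ):ℝ) = 2*((N/D : ℕ):ℝ)+1 by push_cast; ring]
  nlinarith [hC2, Real.rpow_nonneg hR0 κ]

lemma maximal_pointwise (N D : ℕ) (hD : 0 < D) (h12 : 12*(N/D) ≤ D) (κ : ℝ)
    (hC1 : (N:ℝ)^κ ≤ 2*((N/D : ℕ):ℝ)+1) (x : ℝ) (hx : x ∈ EE D) :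
    ∃ t : ℝ, 0 ≤ t ∧ t ≤ 1/(D:ℝ) ∧
      (1/2) * (N:ℝ)^κ ≤ ‖freeSol1 (ftildeCoef N D) x t‖ := by
  simp only [EE, Set.mem_iUnion, Finset.mem_range] at hx
  obtain ⟨l, _, hx1, hx2⟩ := hx
  obtain ⟨t, ht0, ht1, hval⟩ := exists_time N D hD h12 l x ⟨hx1, hx2⟩
  refine ⟨t, ht0, ht1, le_trans ?_ hval⟩
  rw [show ((2*(N/D)+1 : ℕ):ℝ) = 2*((N/D : ℕ):ℝ)+1 by push_cast; ring]
  linarith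

end TMF

namespace TMF

lemma continuous_uncurry (N D : ℕ) (hD : 0 < D) :
    Continuous (Function.uncurry (fun x t : ℝ => ‖freeSol1 (ftildeCoef N D) x t‖)) := by
  have heq : Function.uncurry (fun x t : ℝ => ‖freeSol1 (ftildeCoef N D) x t‖)
      = fun p : ℝ × ℝ => ‖∑ n ∈ SS N D,
          Complex.exp (Complex.I * (((n:ℝ)*p.1 - (n:ℝ)^2*p.2 : ℝ) : ℂ))‖ := by
    funext p
    simp only [Function.uncurry]
    rw [freeSol1_eq_sum N D hD]
  rw [heq]
  apply Continuous.norm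
  apply continuous_finset_sum
  intro n _
  apply Complex.continuous_exp.comp
  apply Continuous.mul continuous_const
  apply Complex.continuous_ofReal.comp
  exact ((continuous_const.mul continuous_fst).sub
    (continuous_const.mul continuous_snd))

lemma maximal_L2_lower (N D : ℕ) (hD : 0 < D) (cc : ℝ) (hcc : 0 ≤ cc)
    (h : ∀ x ∈ EE D, ∃ t : ℝ, 0 ≤ t ∧ t ≤ 1/(D:ℝ) ∧
        cc ≤ ‖freeSol1 (ftildeCoef N D) x t‖) :
    cc ≤ circleL2 (fun x => ⨆ t : Set.Icc (0:ℝ) 1, ‖freeSol1 (ftildeCoef N D) x t.1‖) := by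
  have hD' : (0:ℝ) < (D:ℝ) := Nat.cast_pos.2 hD
  have hD1 : 1/(D:ℝ) ≤ 1 := by
    rw [div_le_one hD']
    exact_mod_cast hD
  set g : ℝ → ℝ := fun x => ⨆ t : Set.Icc (0:ℝ) 1, ‖freeSol1 (ftildeCoef N D) x t.1‖ with hg
  have hgeq : g = fun x => sSup ((fun t => ‖freeSol1 (ftildeCoef N D) x t‖) '' Set.Icc 0 1) := by
    funext x
    rw [hg, sSup_image']
  have hgc : Continuous g := by
    rw [hgeq]
    exact IsCompact.continuous_sSup isCompact_Icc (continuous_uncurry N D hD)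
  have hlow : ∀ x ∈ EE D, cc ≤ g x := by
    intro x hx
    obtain ⟨t, ht0, ht1, hval⟩ := h x hx
    refine le_trans hval ?_
    exact le_ciSup (bdd_sup N D hD x 1) ⟨t, ht0, le_trans ht1 hD1⟩
  unfold circleL2
  rw [show cc = Real.sqrt (cc^2) from (Real.sqrt_sq hcc).symm]
  apply Real.sqrt_le_sqrt
  have hint : IntegrableOn (fun x => (g x)^2) (Set.Icc 0 (2*Real.pi)) volume :=
    (hgc.pow 2).integrableOn_Icc
  have step1 : ∫ x in EE D, (g x)^2 ≤ ∫ x in Set.Icc 0 (2*Real.pi), (g x)^2 := by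
    apply MeasureTheory.setIntegral_mono_set hint
    · filter_upwards with x using sq_nonneg _
    · exact HasSubset.Subset.eventuallyLE (EE_subset D hD)
  refine le_trans ?_ step1
  have step2 : cc^2 * (volume (EE D)).toReal ≤ ∫ x in EE D, (g x)^2 := by
    rw [← measureReal_def]
    apply MeasureTheory.setIntegral_ge_of_const_le_real (EE_measurable D)
    · rw [EE_volume D hD]
      exact ENNReal.ofReal_ne_top
    · intro x hx
      exact pow_le_pow_left₀ hcc (hlow x hx) 2
    · exact hint.mono_set (EE_subset D hD)
  refine le_trans ?_ step2
  rw [EE_volume D hD, ENNReal.toReal_ofReal (by norm_num)]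
  norm_num

end TMF

namespace TMF

lemma hs_tsum (s : ℝ) (N D : ℕ) (hD : 0 < D) :
    (∑' n : ℤ, (Real.sqrt (1 + (n:ℝ)^2)) ^ (2*s) * ‖ftildeCoef N D n‖^2)
      = ∑ n ∈ SS N D, (Real.sqrt (1 + (n:ℝ)^2)) ^ (2*s) := by
  rw [tsum_eq_sum (s := SS N D)]
  · refine Finset.sum_congr rfl fun n hn => ?_
    rw [ftildeCoef_eq hD, if_pos hn]
    simp
  · intro n hn
    rw [ftildeCoef_eq hD, if_neg hn]
    simp

lemma mem_SS_abs {N D : ℕ} (hD : 0 < D) {n : ℤ} (hn : n ∈ SS N D) : |n| ≤ (N:ℤ)+1 := by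
  unfold SS at hn
  simp only [Finset.mem_image, Finset.mem_Icc] at hn
  obtain ⟨k, ⟨hk1, hk2⟩, rfl⟩ := hn
  have h1 : (D:ℤ)*(N/D : ℕ) ≤ (N:ℤ) := by
    have := Nat.div_mul_le_self N D
    exact_mod_cast Nat.mul_div_le N D
  have h2 : |(D:ℤ)*k| ≤ (D:ℤ)*(N/D : ℕ) := by
    rw [abs_mul, abs_of_nonneg (by exact_mod_cast hD.le : (0:ℤ) ≤ (D:ℤ))]
    apply mul_le_mul_of_nonneg_left _ (by exact_mod_cast hD.le : (0:ℤ) ≤ (D:ℤ))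
    exact abs_le.2 ⟨hk1, hk2⟩
  have h3 : |(D:ℤ)*k + 1| ≤ |(D:ℤ)*k| + 1 := by
    refine le_trans (abs_add_le _ _) ?_
    simp
  have h4 : (0:ℤ) ≤ |(D:ℤ)*k| := abs_nonneg _
  linarith [h1, h2, h3, h4]

lemma weight_le (s : ℝ) (hs : 2*(max s 0) ≤ 1) (N : ℕ) (hN : 1 ≤ (N:ℝ)) (n : ℤ)
    (hn : |n| ≤ (N:ℤ)+1) :
    (Real.sqrt (1 + (n:ℝ)^2)) ^ (2*s) ≤ 3*(N:ℝ)^(2*(max s 0)) := by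
  have hN0 : (0:ℝ) < (N:ℝ) := by linarith
  have hs'0 : 0 ≤ max s 0 := le_max_right _ _
  have hbase : (1:ℝ) ≤ 1 + (n:ℝ)^2 := by nlinarith [sq_nonneg ((n:ℝ))]
  have hb1 : (1:ℝ) ≤ Real.sqrt (1+(n:ℝ)^2) := by
    rw [show (1:ℝ) = Real.sqrt 1 by simp]
    exact Real.sqrt_le_sqrt (by simpa using hbase)
  have step1 : (Real.sqrt (1 + (n:ℝ)^2)) ^ (2*s) ≤ (Real.sqrt (1 + (n:ℝ)^2)) ^ (2*(max s 0)) :=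
    Real.rpow_le_rpow_of_exponent_le hb1 (by nlinarith [le_max_left s (0:ℝ)])
  have step2 : (Real.sqrt (1 + (n:ℝ)^2)) ^ (2*(max s 0)) = (1 + (n:ℝ)^2) ^ (max s 0) := by
    rw [Real.sqrt_eq_rpow, ← Real.rpow_mul (by linarith)]
    congr 1
    ring
  have hnN : (n:ℝ)^2 ≤ ((N:ℝ)+1)^2 := by
    have h1 : |(n:ℝ)| ≤ (N:ℝ)+1 := by
      have : ((|n|:ℤ):ℝ) ≤ (((N:ℤ)+1 : ℤ):ℝ) := by exact_mod_cast hn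
      rw [Int.cast_abs] at this
      push_cast at this
      exact this
    nlinarith [abs_nonneg ((n:ℝ)), _root_.sq_abs ((n:ℝ))]
  have step3 : (1 + (n:ℝ)^2) ^ (max s 0) ≤ ((3*(N:ℝ))^2) ^ (max s 0) := by
    apply Real.rpow_le_rpow (by linarith) _ hs'0
    nlinarith
  have step4 : ((3*(N:ℝ))^2) ^ (max s 0) = (3*(N:ℝ)) ^ (2*(max s 0)) := by
    rw [← Real.rpow_natCast (3*(N:ℝ)) 2, ← Real.rpow_mul (by linarith)]
    norm_num
  have step5 : (3*(N:ℝ)) ^ (2*(max s 0)) = 3^(2*(max s 0)) * (N:ℝ)^(2*(max s 0)) :=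
    Real.mul_rpow (by norm_num) hN0.le
  have step6 : (3:ℝ)^(2*(max s 0)) ≤ 3 := by
    have := Real.rpow_le_rpow_of_exponent_le (by norm_num : (1:ℝ) ≤ 3) hs
    rwa [Real.rpow_one] at this
  calc (Real.sqrt (1 + (n:ℝ)^2)) ^ (2*s) ≤ (1 + (n:ℝ)^2) ^ (max s 0) := by
        rw [← step2]; exact step1
  _ ≤ ((3*(N:ℝ))^2) ^ (max s 0) := step3
  _ = 3^(2*(max s 0)) * (N:ℝ)^(2*(max s 0)) := by rw [step4, step5]
  _ ≤ 3*(N:ℝ)^(2*(max s 0)) :=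
      mul_le_mul_of_nonneg_right step6 (Real.rpow_nonneg hN0.le _)

lemma HsNorm_le (s : ℝ) (hs : 2*(max s 0) ≤ 1) (N D : ℕ) (hD : 0 < D) (hN : 1 ≤ (N:ℝ)) :
    HsNorm1 s (ftildeCoef N D)
      ≤ Real.sqrt ((2*((N/D : ℕ):ℝ)+1) * (3*(N:ℝ)^(2*(max s 0)))) := by
  unfold HsNorm1
  apply Real.sqrt_le_sqrt
  rw [hs_tsum s N D hD]
  have hb : ∀ n ∈ SS N D, (Real.sqrt (1 + (n:ℝ)^2)) ^ (2*s) ≤ 3*(N:ℝ)^(2*(max s 0)) :=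
    fun n hn => weight_le s hs N hN n (mem_SS_abs hD hn)
  refine le_trans (Finset.sum_le_card_nsmul _ _ _ hb) ?_
  rw [nsmul_eq_mul, card_SS (N := N) (D := D) hD]
  push_cast
  exact le_of_eq (by ring)

end TMF

namespace TMF

lemma part2 (κ : ℝ) (hκ0 : 0 < κ) (hκ2 : κ < 1/2) :
    ∃ N₀ : ℕ, ∀ N : ℕ, N₀ ≤ N → ∀ D : ℕ, D = Nat.floor ((N:ℝ)^(1-κ)) →
      ((1/2 : ℝ) * (N:ℝ)^(κ/2) ≤ circleL2 (fun x => ‖freeSol1 (ftildeCoef N D) x 0‖)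
        ∧ circleL2 (fun x => ‖freeSol1 (ftildeCoef N D) x 0‖) ≤ 6 * (N:ℝ)^(κ/2))
      ∧ ∃ E : Set ℝ, MeasurableSet E ∧ E ⊆ Set.Icc 0 (2*Real.pi) ∧
          ENNReal.ofReal 1 ≤ volume E ∧
          ∀ x ∈ E, (1/2 : ℝ) * (N:ℝ)^κ
            ≤ ⨆ t : Set.Icc (0:ℝ) (1/(D:ℝ)), ‖freeSol1 (ftildeCoef N D) x t.1‖ := by
  obtain ⟨N₀, hcore⟩ := core κ hκ0 hκ2
  refine ⟨N₀, fun N hN D hDdef => ?_⟩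
  obtain ⟨hD, h12, hC1, hC2, hκ1, hR1⟩ := hcore N hN D hDdef
  have hR0 : (0:ℝ) ≤ (N:ℝ) := by linarith
  refine ⟨⟨L2_lower N D hD κ hR0 hC1, L2_upper N D hD κ hR0 hC2⟩,
    EE D, EE_measurable D, EE_subset D hD, le_of_eq (EE_volume D hD).symm, ?_⟩
  intro x hx
  obtain ⟨t, ht0, ht1, hval⟩ := maximal_pointwise N D hD h12 κ hC1 x hx
  exact le_trans hval (le_ciSup (bdd_sup N D hD x _) ⟨t, ht0, ht1⟩)

lemma part1 (s : ℝ) (hs : s < 1/4) :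
    ¬ ∃ C > (0:ℝ), ∀ c : ℤ → ℂ,
      circleL2 (fun x => ⨆ t : Set.Icc (0:ℝ) 1, ‖freeSol1 c x t.1‖) ≤ C * HsNorm1 s c := by
  rintro ⟨C, hC0, hC⟩
  have hs'0 : (0:ℝ) ≤ max s 0 := le_max_right _ _
  have hs'4 : max s 0 < 1/4 := max_lt hs (by norm_num)
  set κ : ℝ := max s 0 + 1/4 with hκ
  have hκ0 : 0 < κ := by rw [hκ]; linarith
  have hκ2 : κ < 1/2 := by rw [hκ]; linarith
  set δ : ℝ := 1/8 - (max s 0)/2 with hδdef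
  have hδ : 0 < δ := by rw [hδdef]; linarith
  obtain ⟨N₀, hcore⟩ := core κ hκ0 hκ2
  set N : ℕ := max N₀ (⌈(8*C+1)^(1/δ)⌉₊ + 1) with hNdef
  set D : ℕ := Nat.floor ((N:ℝ)^(1-κ)) with hDdef
  obtain ⟨hD, h12, hC1, hC2, hκ1, hR1⟩ := hcore N (le_max_left _ _) D hDdef
  have hR0 : (0:ℝ) < (N:ℝ) := by linarith
  have hRδ : 8*C+1 ≤ (N:ℝ)^δ := by
    have hb : ((8*C+1):ℝ)^(1/δ) ≤ (N:ℝ) := by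
      refine le_trans (Nat.le_ceil _) ?_
      have h1 : ⌈(8*C+1)^(1/δ)⌉₊ ≤ N := le_trans (Nat.le_succ _) (le_max_right _ _)
      exact_mod_cast h1
    have h1 := Real.rpow_le_rpow (by positivity) hb hδ.le
    rwa [← Real.rpow_mul (by positivity), one_div, inv_mul_cancel₀ hδ.ne',
      Real.rpow_one] at h1
  have hlow := maximal_L2_lower N D hD ((1/2)*(N:ℝ)^κ) (by positivity)
    (fun x hx => maximal_pointwise N D hD h12 κ hC1 x hx)
  have hup := hC (ftildeCoef N D)
  have hHs := HsNorm_le s (by linarith : 2*(max s 0) ≤ 1) N D hD hR1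
  have hHs2 : Real.sqrt ((2*((N/D : ℕ):ℝ)+1) * (3*(N:ℝ)^(2*(max s 0))))
      ≤ 4*(N:ℝ)^(κ/2 + max s 0) := by
    have hsq : ((N:ℝ)^(κ/2 + max s 0))^2 = (N:ℝ)^(κ + 2*(max s 0)) := by
      rw [← Real.rpow_natCast _ 2, ← Real.rpow_mul hR0.le]
      congr 1
      push_cast
      ring
    have hmul : (N:ℝ)^κ * (N:ℝ)^(2*(max s 0)) = (N:ℝ)^(κ + 2*(max s 0)) :=
      (Real.rpow_add hR0 _ _).symm
    have h1 : (2*((N/D : ℕ):ℝ)+1) * (3*(N:ℝ)^(2*(max s 0)))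
        ≤ (4*(N:ℝ)^(κ/2 + max s 0))^2 := by
      rw [mul_pow, hsq]
      nlinarith [hC2, Real.rpow_nonneg hR0.le (2*(max s 0)),
        Real.rpow_nonneg hR0.le (κ + 2*(max s 0)), hmul]
    refine le_trans (Real.sqrt_le_sqrt h1) ?_
    rw [Real.sqrt_sq (by positivity)]
  have hfinal : (1/2)*(N:ℝ)^κ ≤ C*(4*(N:ℝ)^(κ/2 + max s 0)) :=
    le_trans hlow (le_trans hup (mul_le_mul_of_nonneg_left (le_trans hHs hHs2) hC0.le))
  have hsplit : (N:ℝ)^(κ/2 + max s 0) * (N:ℝ)^δ = (N:ℝ)^κ := by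
    rw [← Real.rpow_add hR0]
    congr 1
    rw [hκ, hδdef]
    ring
  have hP : (0:ℝ) < (N:ℝ)^(κ/2 + max s 0) := Real.rpow_pos_of_pos hR0 _
  have hfinal2 : (1/2)*((N:ℝ)^(κ/2 + max s 0) * (N:ℝ)^δ)
      ≤ C*(4*(N:ℝ)^(κ/2 + max s 0)) := by
    rw [hsplit]
    exact hfinal
  have hint : (N:ℝ)^(κ/2 + max s 0)*(8*C+1) ≤ (N:ℝ)^(κ/2 + max s 0)*(N:ℝ)^δ :=
    mul_le_mul_of_nonneg_left hRδ hP.le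
  nlinarith [hfinal2, hint, hP]

end TMF

/-- The maximal estimate on `𝕋` fails for every `s < 1/4`; quantitatively, the modulated
Dirichlet-type data `f̃` with `D = ⌊N^{1-κ}⌋` has `‖f̃‖_{L²} ∼ N^{κ/2}` while its maximal
function is `≳ N^κ` on a set of measure comparable to `1`. -/
theorem torus_maximal_fails_below_quarter :
    (∀ s : ℝ, s < 1/4 → ¬ ∃ C > (0:ℝ), ∀ c : ℤ → ℂ,
        circleL2 (fun x => ⨆ t : Set.Icc (0:ℝ) 1, ‖freeSol1 c x t.1‖) ≤ C * HsNorm1 s c)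
    ∧ ∃ c₀ > (0:ℝ), ∃ c₁ > (0:ℝ), ∃ c₂ > (0:ℝ), ∀ κ : ℝ, 0 < κ → κ < 1/2 →
        ∃ N₀ : ℕ, ∀ N : ℕ, N₀ ≤ N → ∀ D : ℕ, D = Nat.floor ((N:ℝ)^(1-κ)) →
          (c₁ * (N:ℝ)^(κ/2) ≤ circleL2 (fun x => ‖freeSol1 (ftildeCoef N D) x 0‖)
            ∧ circleL2 (fun x => ‖freeSol1 (ftildeCoef N D) x 0‖) ≤ c₂ * (N:ℝ)^(κ/2))
          ∧ ∃ E : Set ℝ, MeasurableSet E ∧ E ⊆ Set.Icc 0 (2*Real.pi) ∧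
              ENNReal.ofReal c₀ ≤ volume E ∧
              ∀ x ∈ E, c₁ * (N:ℝ)^κ
                ≤ ⨆ t : Set.Icc (0:ℝ) (1/(D:ℝ)), ‖freeSol1 (ftildeCoef N D) x t.1‖ := by
  constructor
  · exact fun s hs => TMF.part1 s hs
  · exact ⟨1, by norm_num, 1/2, by norm_num, 6, by norm_num,
      fun κ hκ0 hκ2 => TMF.part2 κ hκ0 hκ2⟩
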